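/- Transfer lemma: let φ be the Thue–Morse morphism and k ≥ 1. For all nonempty words u, v, v' with |v| = |v'|, φ^{k-1}(u) · φ^k(v) ∼_k φ^k(v') · φ^{k-1}(u). -/
import Mathlib


/-- Number of occurrences of the second word as a (scattered) subword of the first. -/
def binom {α : Type*} [DecidableEq α] : List α → List α → ℕ
  | _, [] => 1
  | [], _ :: _ => 0
  | a :: u, b :: v => binom u (b :: v) + if a = b then binom u v else 0

/-- k-binomial equivalence. -/
def BinEq (k : ℕ) (u v : List Bool) : Prop :=
  ∀ x : List Bool, x.length ≤ k → binom u x = binom v x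

/-- The Thue–Morse word: `tm n` is the parity of the number of ones
in the binary expansion of `n` (`false` plays the role of the letter 0). -/
def tm (n : ℕ) : Bool := (Nat.digits 2 n).count 1 % 2 == 1

/-- `u` occurs as a (contiguous) factor of the Thue–Morse word. -/
def isFactorTM (u : List Bool) : Prop :=
  ∃ i : ℕ, u = (List.range u.length).map (fun j => tm (i + j))

/-- The Thue–Morse morphism φ(0)=01, φ(1)=10, extended to words. -/
def phiW (w : List Bool) : List Bool :=
  w.flatMap (fun a => if a then [true, false] else [false, true])

/-! ### Auxiliary development -/

lemma binom_nil_right {α : Type*} [DecidableEq α] (u : List α) : binom u [] = 1 := by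
  cases u <;> rfl

lemma binom_nil_left {α : Type*} [DecidableEq α] (b : α) (v : List α) :
    binom [] (b :: v) = 0 := rfl

lemma binom_cons {α : Type*} [DecidableEq α] (a : α) (u : List α) (b : α) (v : List α) :
    binom (a :: u) (b :: v) = binom u (b :: v) + if a = b then binom u v else 0 := rfl

/-- All boolean words of length `n`. -/
def wordsB : ℕ → List (List Bool)
  | 0 => [[]]
  | n + 1 => (wordsB n).flatMap (fun w => [false :: w, true :: w])

lemma mem_wordsB : ∀ {m : ℕ} {y : List Bool}, y ∈ wordsB m → y.length = m := by
  intro m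
  induction m with
  | zero => intro y hy; simp [wordsB] at hy; simp [hy]
  | succ n ih =>
    intro y hy
    simp only [wordsB, List.mem_flatMap, List.mem_cons, List.not_mem_nil, or_false] at hy
    obtain ⟨w, hw, rfl | rfl⟩ := hy <;> simp [ih hw]

/-- The coefficient of `binom u y` in the expansion of `binom (phiW u) x`. -/
def coeffB : List Bool → List Bool → ℕ
  | [], [] => 1
  | [], _ :: _ => 0
  | _ :: _, [] => 0
  | [_], _ :: y => coeffB [] y
  | a :: c :: x, b :: y =>
      coeffB (c :: x) y + if a = b ∧ c = !b then coeffB x y else 0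

lemma coeffB_nil_right (a : Bool) (x : List Bool) : coeffB (a :: x) [] = 0 := by
  cases x <;> rfl

lemma coeffB_zero_of_lt : ∀ (y x : List Bool), x.length < y.length → coeffB x y = 0 := by
  intro y
  induction y with
  | nil => intro x hx; simp at hx
  | cons b y ih =>
    intro x hx
    match x with
    | [] => rfl
    | [a] =>
      have : ([] : List Bool).length < y.length := by simp at hx ⊢; omega
      simpa [coeffB] using ih [] this
    | a :: c :: x =>
      simp only [List.length_cons] at hx
      have h1 : (c :: x).length < y.length := by simp; omega
      have h2 : x.length < y.length := by omega
      simp [coeffB, ih _ h1, ih _ h2]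

lemma coeffB_one_of_eq : ∀ (y x : List Bool), x.length = y.length → coeffB x y = 1 := by
  intro y
  induction y with
  | nil =>
    intro x hx
    have : x = [] := List.length_eq_zero_iff.mp (by simpa using hx)
    subst this; rfl
  | cons b y ih =>
    intro x hx
    match x with
    | [] => simp at hx
    | [a] =>
      have : y.length = 0 := by simp only [List.length_cons, List.length_nil] at hx; omega
      have hy : y = [] := List.length_eq_zero_iff.mp this
      subst hy; rfl
    | a :: c :: x =>
      simp only [List.length_cons] at hx
      have h1 : (c :: x).length = y.length := by simp; omega
      have h2 : x.length < y.length := by omega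
      simp [coeffB, ih _ h1, coeffB_zero_of_lt _ _ h2]

lemma sum_map_add {α : Type*} (l : List α) (f g : α → ℕ) :
    (l.map (fun a => f a + g a)).sum = (l.map f).sum + (l.map g).sum := by
  induction l with
  | nil => simp
  | cons a l ih => simp [ih]; omega

lemma sum_flat (l : List (List Bool)) (f : List Bool → ℕ) :
    ((l.flatMap (fun w => [false :: w, true :: w])).map f).sum
      = (l.map (fun w => f (false :: w) + f (true :: w))).sum := by
  induction l with
  | nil => rfl
  | cons w l ih =>
    simp only [List.flatMap_cons, List.map_append, List.sum_append, ih, List.map_cons,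
      List.sum_cons, List.map_nil, List.sum_nil]
    omega

/-- Inner sum: over all words of length `m`. -/
def innerB (x u : List Bool) (m : ℕ) : ℕ :=
  ((wordsB m).map (fun y => coeffB x y * binom u y)).sum

/-- The expansion of `binom (phiW u) x`. -/
def FF (x u : List Bool) (N : ℕ) : ℕ := ∑ m ∈ Finset.range N, innerB x u m

lemma innerB_eq_zero_of_lt {x : List Bool} {m : ℕ} (u : List Bool)
    (h : x.length < m) : innerB x u m = 0 := by
  apply List.sum_eq_zero
  intro z hz
  simp only [List.mem_map] at hz
  obtain ⟨y, hy, rfl⟩ := hz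
  rw [coeffB_zero_of_lt y x (by rw [mem_wordsB hy]; exact h), zero_mul]

lemma FF_trunc {x : List Bool} (u : List Bool) {M N : ℕ} (h : x.length < M)
    (hMN : M ≤ N) : FF x u N = FF x u M := by
  refine (Finset.sum_subset (Finset.range_subset_range.2 hMN) ?_).symm
  intro m hm hnm
  simp only [Finset.mem_range] at hm hnm
  exact innerB_eq_zero_of_lt u (by omega)

lemma innerB_cons_zero (x u : List Bool) (b : Bool) :
    innerB x (b :: u) 0 = innerB x u 0 := by
  simp [innerB, wordsB, binom_nil_right]

lemma innerB_cons_succ (x u : List Bool) (b : Bool) (m : ℕ) :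
    innerB x (b :: u) (m + 1) = innerB x u (m + 1)
      + ((wordsB m).map (fun y => coeffB x (b :: y) * binom u y)).sum := by
  have hw : wordsB (m + 1) = (wordsB m).flatMap (fun w => [false :: w, true :: w]) := rfl
  unfold innerB
  rw [hw, sum_flat, sum_flat, ← sum_map_add]
  congr 1
  apply List.map_congr_left
  intro w _
  cases b <;> simp [binom_cons] <;> ring

lemma FF_cons (x u : List Bool) (b : Bool) (N : ℕ) :
    FF x (b :: u) (N + 1) = FF x u (N + 1)
      + ∑ m ∈ Finset.range N, ((wordsB m).map (fun y => coeffB x (b :: y) * binom u y)).sum := by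
  unfold FF
  rw [Finset.sum_range_succ' (innerB x (b :: u)), Finset.sum_range_succ' (innerB x u)]
  simp only [innerB_cons_succ, innerB_cons_zero, Finset.sum_add_distrib]
  ring

lemma phiW_cons (b : Bool) (u : List Bool) : phiW (b :: u) = b :: (!b) :: phiW u := by
  cases b <;> rfl

lemma phi_formula : ∀ (u x : List Bool) (N : ℕ), x.length < N →
    binom (phiW u) x = FF x u N := by
  intro u
  induction u with
  | nil =>
    intro x N hN
    match x with
    | [] =>
      have h1 : FF ([] : List Bool) [] N = FF [] [] 1 := FF_trunc _ (by simp) (by omega)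
      rw [show phiW [] = [] from rfl, binom_nil_right, h1]
      show 1 = ∑ m ∈ Finset.range 1, innerB [] [] m
      rw [Finset.sum_range_one]
      rfl
    | a :: x' =>
      rw [show phiW [] = [] from rfl, binom_nil_left]
      symm
      apply Finset.sum_eq_zero
      intro m _
      match m with
      | 0 =>
        show ((wordsB 0).map (fun y => coeffB (a :: x') y * binom ([] : List Bool) y)).sum = 0
        simp only [wordsB, List.map_cons, List.map_nil, List.sum_cons, List.sum_nil]
        rw [coeffB_nil_right, zero_mul]
        rfl
      | m + 1 =>
        apply List.sum_eq_zero
        intro z hz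
        simp only [List.mem_map] at hz
        obtain ⟨y, hy, rfl⟩ := hz
        have hylen := mem_wordsB hy
        match y with
        | [] => simp at hylen
        | c :: ys => rw [binom_nil_left, mul_zero]
  | cons b u' ih =>
    intro x N hN
    obtain ⟨N₀, rfl⟩ : ∃ N₀, N = N₀ + 1 := ⟨N - 1, by omega⟩
    rw [phiW_cons, FF_cons]
    match x with
    | [] =>
      rw [binom_nil_right, ← ih [] (N₀ + 1) (by simp), binom_nil_right]
      have : ∀ m ∈ Finset.range N₀,
          ((wordsB m).map (fun y => coeffB [] (b :: y) * binom u' y)).sum = 0 := by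
        intro m _
        apply List.sum_eq_zero
        intro z hz
        simp only [List.mem_map] at hz
        obtain ⟨y, hy, rfl⟩ := hz
        rw [show coeffB [] (b :: y) = 0 from rfl, zero_mul]
      rw [Finset.sum_congr rfl this]
      simp
    | [a] =>
      simp only [List.length_cons, List.length_nil] at hN
      have hN₀ : 1 ≤ N₀ := by omega
      have hcoe : ∀ y : List Bool, coeffB [a] (b :: y) = coeffB [] y := fun y => rfl
      have hsum : ∑ m ∈ Finset.range N₀,
          ((wordsB m).map (fun y => coeffB [a] (b :: y) * binom u' y)).sum
          = FF [] u' N₀ := by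
        apply Finset.sum_congr rfl
        intro m _
        unfold innerB
        apply congrArg
        apply List.map_congr_left
        intro y _
        rw [hcoe]
      rw [hsum, FF_trunc u' (show ([] : List Bool).length < 1 by simp) hN₀]
      have hFF0 : FF ([] : List Bool) u' 1 = 1 := by
        show ∑ m ∈ Finset.range 1, innerB [] u' m = 1
        rw [Finset.sum_range_one]
        show ((wordsB 0).map (fun y => coeffB [] y * binom u' y)).sum = 1
        simp only [wordsB, List.map_cons, List.map_nil, List.sum_cons, List.sum_nil]
        rw [show coeffB ([] : List Bool) [] = 1 from rfl, binom_nil_right]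
        norm_num
      rw [hFF0, ← ih [a] (N₀ + 1) (by simp only [List.length_cons, List.length_nil]; omega)]
      cases a <;> cases b <;> simp [binom_cons, binom_nil_right]
    | a :: c :: x'' =>
      simp only [List.length_cons] at hN
      have hx'' : x''.length < N₀ := by omega
      have hx' : (c :: x'').length < N₀ := by simp; omega
      have hcoe : ∀ y : List Bool, coeffB (a :: c :: x'') (b :: y)
          = coeffB (c :: x'') y + if a = b ∧ c = !b then coeffB x'' y else 0 := fun y => rfl
      have hsum : ∑ m ∈ Finset.range N₀,
          ((wordsB m).map (fun y => coeffB (a :: c :: x'') (b :: y) * binom u' y)).sum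
          = FF (c :: x'') u' N₀ + if a = b ∧ c = !b then FF x'' u' N₀ else 0 := by
        unfold FF innerB
        by_cases hc : a = b ∧ c = !b
        · rw [if_pos hc, ← Finset.sum_add_distrib]
          apply Finset.sum_congr rfl
          intro m _
          rw [← sum_map_add]
          apply congrArg List.sum
          apply List.map_congr_left
          intro y _
          show coeffB (a :: c :: x'') (b :: y) * binom u' y = _
          rw [hcoe, if_pos hc, add_mul]
        · rw [if_neg hc, add_zero]
          apply Finset.sum_congr rfl
          intro m _
          apply congrArg List.sum
          apply List.map_congr_left
          intro y _
          show coeffB (a :: c :: x'') (b :: y) * binom u' y = _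
          rw [hcoe, if_neg hc, add_zero]
      rw [hsum, ← ih (c :: x'') N₀ hx', ← ih x'' N₀ hx'',
        ← ih (a :: c :: x'') (N₀ + 1) (by simp; omega)]
      cases a <;> cases b <;> cases c <;>
        simp [binom_cons, binom_nil_right] <;> ring

lemma sum_wordsB_binom : ∀ (u : List Bool) (m : ℕ),
    ((wordsB m).map (binom u)).sum = Nat.choose u.length m := by
  intro u
  induction u with
  | nil =>
    intro m
    match m with
    | 0 => rfl
    | m + 1 =>
      rw [show Nat.choose ([] : List Bool).length (m+1) = 0 by simp]
      apply List.sum_eq_zero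
      intro z hz
      simp only [List.mem_map] at hz
      obtain ⟨y, hy, rfl⟩ := hz
      have hylen := mem_wordsB hy
      match y with
      | [] => simp at hylen
      | c :: ys => rfl
  | cons a u' ih =>
    intro m
    match m with
    | 0 => simp [wordsB, binom_nil_right]
    | m + 1 =>
      have hw : wordsB (m + 1) = (wordsB m).flatMap (fun w => [false :: w, true :: w]) := rfl
      rw [hw, sum_flat]
      have : ((wordsB m).map
          (fun w => binom (a :: u') (false :: w) + binom (a :: u') (true :: w))).sum
          = ((wordsB m).map
            (fun w => (binom u' (false :: w) + binom u' (true :: w)) + binom u' w)).sum := by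
        apply congrArg
        apply List.map_congr_left
        intro w _
        cases a <;> simp [binom_cons] <;> ring
      rw [this, sum_map_add, ← sum_flat, ← hw, ih (m + 1), ih m]
      simp [Nat.choose_succ_succ, Nat.add_comm]

lemma innerB_top (x u : List Bool) :
    innerB x u x.length = Nat.choose u.length x.length := by
  rw [← sum_wordsB_binom u x.length]
  unfold innerB
  apply congrArg List.sum
  apply List.map_congr_left
  intro y hy
  rw [coeffB_one_of_eq y x (by rw [mem_wordsB hy]), one_mul]

lemma binom_length (u : List Bool) :
    binom u [true] + binom u [false] = u.length := by
  induction u with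
  | nil => rfl
  | cons a u ih =>
    cases a <;> simp [binom_cons, binom_nil_right] <;> omega

lemma length_eq_of_binEq {k : ℕ} (hk : 1 ≤ k) {u v : List Bool} (h : BinEq k u v) :
    u.length = v.length := by
  have h1 := h [true] (by simpa using hk)
  have h2 := h [false] (by simpa using hk)
  have := binom_length u
  have := binom_length v
  omega

lemma phi_binEq {k : ℕ} (hk : 1 ≤ k) {u v : List Bool} (h : BinEq k u v) :
    BinEq (k + 1) (phiW u) (phiW v) := by
  have hlen := length_eq_of_binEq hk h
  intro x hx
  rw [phi_formula u x (x.length + 1) (by omega), phi_formula v x (x.length + 1) (by omega)]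
  apply Finset.sum_congr rfl
  intro m hm
  simp only [Finset.mem_range] at hm
  by_cases hmk : m ≤ k
  · unfold innerB
    apply congrArg
    apply List.map_congr_left
    intro y hy
    rw [h y (by rw [mem_wordsB hy]; exact hmk)]
  · have hm' : m = x.length := by omega
    subst hm'
    rw [innerB_top, innerB_top, hlen]

lemma iter_binEq {u v : List Bool} (h : BinEq 1 u v) :
    ∀ j, BinEq (1 + j) (phiW^[j] u) (phiW^[j] v) := by
  intro j
  induction j with
  | zero => simpa using h
  | succ n ih =>
    rw [Function.iterate_succ_apply', Function.iterate_succ_apply']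
    have h : 1 + (n + 1) = (1 + n) + 1 := by omega
    rw [h]
    exact phi_binEq (by omega) ih

lemma binom_single_append {α : Type*} [DecidableEq α] (s t : List α) (c : α) :
    binom (s ++ t) [c] = binom s [c] + binom t [c] := by
  induction s with
  | nil => simp [binom_nil_left]
  | cons a s ih => simp [binom_cons, binom_nil_right, ih]; ring

lemma binom_phiW_single (v : List Bool) (c : Bool) :
    binom (phiW v) [c] = v.length := by
  induction v with
  | nil => cases c <;> rfl
  | cons b v ih =>
    rw [phiW_cons]
    cases b <;> cases c <;> simp [binom_cons, binom_nil_right, ih] <;> omega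

lemma base_binEq {u v v' : List Bool} (hlen : v.length = v'.length) :
    BinEq 1 (u ++ phiW v) (phiW v' ++ u) := by
  intro x hx
  match x with
  | [] => rw [binom_nil_right, binom_nil_right]
  | [c] =>
    rw [binom_single_append, binom_single_append, binom_phiW_single, binom_phiW_single, hlen]
    ring
  | a :: b :: x' => simp at hx

lemma phiW_append (a b : List Bool) : phiW (a ++ b) = phiW a ++ phiW b := by
  simp [phiW]

lemma iter_phiW_append (j : ℕ) (a b : List Bool) :
    phiW^[j] (a ++ b) = phiW^[j] a ++ phiW^[j] b := by
  induction j generalizing a b with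
  | zero => rfl
  | succ n ih => simp [Function.iterate_succ_apply, phiW_append, ih]

theorem transfer_lemma (k : ℕ) (hk : 1 ≤ k) (u v v' : List Bool)
    (hu : u ≠ []) (hv : v ≠ []) (hv' : v' ≠ []) (hlen : v.length = v'.length) :
    BinEq k (phiW^[k - 1] u ++ phiW^[k] v) (phiW^[k] v' ++ phiW^[k - 1] u) := by
  obtain ⟨j, rfl⟩ : ∃ j, k = j + 1 := ⟨k - 1, by omega⟩
  have h1 : BinEq 1 (u ++ phiW v) (phiW v' ++ u) := base_binEq hlen
  have h2 := iter_binEq h1 j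
  rw [iter_phiW_append, iter_phiW_append, ← Function.iterate_succ_apply,
    ← Function.iterate_succ_apply] at h2
  have hj : j + 1 - 1 = j := by omega
  rw [hj]
  have : 1 + j = j + 1 := Nat.add_comm 1 j
  rw [this] at h2
  exact h2
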